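/- (Generalized Moyal identity) For any four Schwartz functions ψ₁, ψ₂, χ₁, χ₂ : ℝ → ℂ, the integrated overlapping product of the generalized Wigner distributions satisfies ∫_ℝ ∫_ℝ W_{(ψ₁,ψ₂)}(x,p) · W_{(χ₁,χ₂)}(x,p) dx dp = (1/(2πħ)) · (∫_ℝ conj(ψ₁(x)) χ₂(x) dx) · (∫_ℝ conj(χ₁(x)) ψ₂(x) dx). -/

import Mathlib

open MeasureTheory

/-- The generalized Wigner distribution of a pair of wavefunctions `ψ₁, ψ₂ : ℝ → ℂ`:
`W_{(ψ₁,ψ₂)}(x,p) = (1/(2π hbar)) ∫ conj(ψ₁(x + x'/2)) ψ₂(x - x'/2) exp(i p x'/hbar) dx'`. -/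
noncomputable def wignerPair (hbar : ℝ) (ψ₁ ψ₂ : ℝ → ℂ) (x p : ℝ) : ℂ :=
  ((1 / (2 * Real.pi * hbar) : ℝ) : ℂ) *
    ∫ x' : ℝ, (starRingEnd ℂ) (ψ₁ (x + x' / 2)) * ψ₂ (x - x' / 2) *
      Complex.exp (Complex.I * (p : ℂ) * (x' : ℂ) / (hbar : ℂ))


open MeasureTheory Real Complex SchwartzMap
open scoped FourierTransform

noncomputable section

namespace WignerMoyal

lemma decay4 (φ : SchwartzMap ℝ ℂ) : ∃ C, 0 ≤ C ∧ ∀ t : ℝ, ‖φ t‖ * (1 + |t|) ^ 4 ≤ C := by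
  obtain ⟨C0, hC0, h0⟩ := φ.decay 0 0
  obtain ⟨C4, hC4, h4⟩ := φ.decay 4 0
  refine ⟨16 * (C0 + C4), by positivity, fun t => ?_⟩
  have h0t := h0 t
  have h4t := h4 t
  simp only [pow_zero, one_mul, norm_iteratedFDeriv_zero, Real.norm_eq_abs] at h0t h4t
  have ha : (0:ℝ) ≤ |t| := abs_nonneg t
  have hn : (0:ℝ) ≤ ‖φ t‖ := norm_nonneg _
  have hpoly : (1 + |t|) ^ 4 ≤ 16 * (1 + |t| ^ 4) := by nlinarith [sq_nonneg (|t| - 1), sq_nonneg (|t|^2 - 1), sq_nonneg (|t|^2 - |t|), sq_nonneg (|t| + 1)]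
  calc ‖φ t‖ * (1 + |t|) ^ 4 ≤ ‖φ t‖ * (16 * (1 + |t| ^ 4)) := by
        exact mul_le_mul_of_nonneg_left hpoly hn
    _ = 16 * (‖φ t‖ + |t| ^ 4 * ‖φ t‖) := by ring
    _ ≤ 16 * (C0 + C4) := by nlinarith

lemma geom {u v a b : ℝ} (ha : |a| ≤ |u| + |v|) (hb : |b| ≤ |u| + |v|) :
    (1 + |a|) ^ 2 * (1 + |b|) ^ 2 ≤ (1 + |u|) ^ 4 * (1 + |v|) ^ 4 := by
  have hu : (0:ℝ) ≤ |u| := abs_nonneg u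
  have hv : (0:ℝ) ≤ |v| := abs_nonneg v
  have h1 : 1 + |a| ≤ (1 + |u|) * (1 + |v|) := by nlinarith
  have h2 : 1 + |b| ≤ (1 + |u|) * (1 + |v|) := by nlinarith
  have ha' : (0:ℝ) ≤ 1 + |a| := by positivity
  have hb' : (0:ℝ) ≤ 1 + |b| := by positivity
  calc (1 + |a|) ^ 2 * (1 + |b|) ^ 2
      ≤ ((1 + |u|) * (1 + |v|)) ^ 2 * ((1 + |u|) * (1 + |v|)) ^ 2 := by
        gcongr
    _ = (1 + |u|) ^ 4 * (1 + |v|) ^ 4 := by ring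

lemma pair_norm_bound (φ₁ φ₂ : SchwartzMap ℝ ℂ) :
    ∃ C, 0 ≤ C ∧ ∀ u v a b : ℝ, |a| ≤ |u| + |v| → |b| ≤ |u| + |v| →
      ‖φ₁ u‖ * ‖φ₂ v‖ ≤ C * ((1 + |a|) ^ 2)⁻¹ * ((1 + |b|) ^ 2)⁻¹ := by
  obtain ⟨C1, hC1, h1⟩ := decay4 φ₁
  obtain ⟨C2, hC2, h2⟩ := decay4 φ₂
  refine ⟨C1 * C2, by positivity, fun u v a b hau hbu => ?_⟩
  have key : ‖φ₁ u‖ * ‖φ₂ v‖ * ((1 + |a|) ^ 2 * (1 + |b|) ^ 2) ≤ C1 * C2 := by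
    calc ‖φ₁ u‖ * ‖φ₂ v‖ * ((1 + |a|) ^ 2 * (1 + |b|) ^ 2)
        ≤ ‖φ₁ u‖ * ‖φ₂ v‖ * ((1 + |u|) ^ 4 * (1 + |v|) ^ 4) := by
          have := geom hau hbu
          have hnn : (0:ℝ) ≤ ‖φ₁ u‖ * ‖φ₂ v‖ := by positivity
          nlinarith
      _ = (‖φ₁ u‖ * (1 + |u|) ^ 4) * (‖φ₂ v‖ * (1 + |v|) ^ 4) := by ring
      _ ≤ C1 * C2 := by
          have := h1 u; have := h2 v
          have : (0:ℝ) ≤ ‖φ₂ v‖ * (1 + |v|) ^ 4 := by positivity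
          nlinarith [h1 u, h2 v, mul_nonneg (norm_nonneg (φ₁ u)) (pow_nonneg (by positivity : (0:ℝ) ≤ 1 + |u|) 4)]
  have hP : (0:ℝ) < (1 + |a|) ^ 2 := by positivity
  have hQ : (0:ℝ) < (1 + |b|) ^ 2 := by positivity
  rw [mul_assoc, ← mul_inv]
  rw [le_mul_inv_iff₀ (by positivity)]
  linarith [key]

lemma integrable_inv_pow {k : ℕ} (hk : 1 < (k:ℝ)) :
    Integrable (fun t : ℝ => ((1 + |t|) ^ k)⁻¹) := by
  have h := integrable_one_add_norm (E := ℝ) (μ := volume) (r := k) (by simpa using hk)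
  refine h.congr (Filter.Eventually.of_forall fun t => ?_)
  show (1 + ‖t‖) ^ (-(k:ℝ)) = ((1 + |t|) ^ k)⁻¹
  rw [Real.rpow_neg (by positivity), Real.rpow_natCast, Real.norm_eq_abs]


/-- The cross-correlation integrand of the Wigner transform. -/
def pairFn (φ₁ φ₂ : SchwartzMap ℝ ℂ) (x t : ℝ) : ℂ :=
  (starRingEnd ℂ) (φ₁ (x + t / 2)) * φ₂ (x - t / 2)

variable (φ₁ φ₂ : SchwartzMap ℝ ℂ)

lemma pairFn_norm (x t : ℝ) : ‖pairFn φ₁ φ₂ x t‖ = ‖φ₁ (x + t/2)‖ * ‖φ₂ (x - t/2)‖ := by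
  simp [pairFn]

lemma abs_le_sum₁ (x t : ℝ) : |x| ≤ |x + t/2| + |x - t/2| := by
  have h : |(x + t/2) + (x - t/2)| ≤ |x + t/2| + |x - t/2| := abs_add_le _ _
  rw [show (x + t/2) + (x - t/2) = 2*x by ring, abs_mul] at h
  rw [show |(2:ℝ)| = 2 by norm_num] at h
  linarith [abs_nonneg x]

lemma abs_le_sum₂ (x t : ℝ) : |t| ≤ |x + t/2| + |x - t/2| := by
  have h : |(x + t/2) - (x - t/2)| ≤ |x + t/2| + |x - t/2| := abs_sub _ _
  rwa [show (x + t/2) - (x - t/2) = t by ring] at h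

lemma pairFn_bound (φ₁ φ₂ : SchwartzMap ℝ ℂ) : ∃ C, 0 ≤ C ∧ ∀ x t : ℝ,
    ‖pairFn φ₁ φ₂ x t‖ ≤ C * ((1 + |x|) ^ 2)⁻¹ * ((1 + |t|) ^ 2)⁻¹ := by
  obtain ⟨C, hC, h⟩ := pair_norm_bound φ₁ φ₂
  refine ⟨C, hC, fun x t => ?_⟩
  rw [pairFn_norm]
  exact h (x + t/2) (x - t/2) x t (abs_le_sum₁ x t) (abs_le_sum₂ x t)

lemma pairFn_continuous₂ : Continuous (fun q : ℝ × ℝ => pairFn φ₁ φ₂ q.1 q.2) := by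
  simp only [pairFn, starRingEnd_apply]
  exact ((continuous_star.comp (φ₁.continuous.comp (by continuity))).mul
    (φ₂.continuous.comp (by continuity)))

lemma pairFn_continuous (x : ℝ) : Continuous (pairFn φ₁ φ₂ x) :=
  (pairFn_continuous₂ φ₁ φ₂).comp (continuous_const.prodMk continuous_id)

lemma pairFn_integrable (x : ℝ) : Integrable (pairFn φ₁ φ₂ x) := by
  obtain ⟨C, hC, h⟩ := pairFn_bound φ₁ φ₂
  refine Integrable.mono' (((integrable_inv_pow (k := 2) (by norm_num)).const_mul
      (C * ((1 + |x|) ^ 2)⁻¹))) ((pairFn_continuous φ₁ φ₂ x).aestronglyMeasurable)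
      (Filter.Eventually.of_forall fun t => ?_)
  simpa [mul_assoc] using h x t

lemma pairFn_intNorm (φ₁ φ₂ : SchwartzMap ℝ ℂ) : ∃ C, 0 ≤ C ∧ ∀ x : ℝ,
    (∫ t : ℝ, ‖pairFn φ₁ φ₂ x t‖) ≤ C * ((1 + |x|) ^ 2)⁻¹ := by
  obtain ⟨C, hC, h⟩ := pairFn_bound φ₁ φ₂
  set K := ∫ t : ℝ, ((1 + |t|) ^ 2)⁻¹ with hK
  have hKnn : 0 ≤ K := integral_nonneg fun t => by positivity
  refine ⟨C * K, by positivity, fun x => ?_⟩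
  have hint : Integrable (fun t : ℝ => C * ((1 + |x|) ^ 2)⁻¹ * ((1 + |t|) ^ 2)⁻¹) :=
    (integrable_inv_pow (k := 2) (by norm_num)).const_mul _
  calc (∫ t : ℝ, ‖pairFn φ₁ φ₂ x t‖)
      ≤ ∫ t : ℝ, C * ((1 + |x|) ^ 2)⁻¹ * ((1 + |t|) ^ 2)⁻¹ :=
        integral_mono ((pairFn_integrable φ₁ φ₂ x).norm) hint (fun t => h x t)
    _ = C * ((1 + |x|) ^ 2)⁻¹ * K := by rw [integral_const_mul]
    _ = C * K * ((1 + |x|) ^ 2)⁻¹ := by ring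

lemma pairFn_hasDerivAt (x t : ℝ) :
    HasDerivAt (pairFn φ₁ φ₂ x)
      ((1/2 : ℂ) * pairFn (SchwartzMap.derivCLM ℝ ℂ φ₁) φ₂ x t
        - (1/2 : ℂ) * pairFn φ₁ (SchwartzMap.derivCLM ℝ ℂ φ₂) x t) t := by
  have h1 : HasDerivAt (fun s : ℝ => x + s/2) (1/2 : ℝ) t := by
    simpa using ((hasDerivAt_id t).div_const 2).const_add x
  have h2 : HasDerivAt (fun s : ℝ => x - s/2) (-(1/2) : ℝ) t := by
    simpa using ((hasDerivAt_id t).div_const 2).const_sub x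
  have hφ₁ : HasDerivAt (⇑φ₁) (deriv (⇑φ₁) (x + t/2)) (x + t/2) :=
    (φ₁.differentiable _).hasDerivAt
  have hφ₂ : HasDerivAt (⇑φ₂) (deriv (⇑φ₂) (x - t/2)) (x - t/2) :=
    (φ₂.differentiable _).hasDerivAt
  have hc1 : HasDerivAt (fun s : ℝ => φ₁ (x + s/2)) ((1/2 : ℝ) • deriv (⇑φ₁) (x + t/2)) t :=
    hφ₁.scomp t h1
  have hc2 : HasDerivAt (fun s : ℝ => φ₂ (x - s/2)) ((-(1/2) : ℝ) • deriv (⇑φ₂) (x - t/2)) t :=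
    hφ₂.scomp t h2
  have hs : HasDerivAt (fun s : ℝ => (starRingEnd ℂ) (φ₁ (x + s/2)))
      (star ((1/2 : ℝ) • deriv (⇑φ₁) (x + t/2))) t := by
    exact hc1.star
  have := hs.mul hc2
  convert this using 1 <;> try rfl
  have h12 : star ((1/2 : ℝ) • deriv (⇑φ₁) (x + t/2))
      = (1/2 : ℂ) * (starRingEnd ℂ) (deriv (⇑φ₁) (x + t/2)) := by
    rw [star_smul, star_trivial, Complex.real_smul, starRingEnd_apply]
    norm_num
  rw [h12]
  simp only [pairFn, SchwartzMap.derivCLM_apply, Complex.real_smul]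
  push_cast
  ring

variable (φ₁ φ₂ : SchwartzMap ℝ ℂ)

lemma pairFn_deriv (x : ℝ) : deriv (pairFn φ₁ φ₂ x) = fun t =>
    (1/2 : ℂ) * pairFn (SchwartzMap.derivCLM ℝ ℂ φ₁) φ₂ x t
      - (1/2 : ℂ) * pairFn φ₁ (SchwartzMap.derivCLM ℝ ℂ φ₂) x t :=
  funext fun t => (pairFn_hasDerivAt φ₁ φ₂ x t).deriv

lemma pairFn_differentiable (x : ℝ) : Differentiable ℝ (pairFn φ₁ φ₂ x) :=
  fun t => (pairFn_hasDerivAt φ₁ φ₂ x t).differentiableAt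

/-- The second derivative of `pairFn` in the relative coordinate. -/
def pairFn2 (φ₁ φ₂ : SchwartzMap ℝ ℂ) (x t : ℝ) : ℂ :=
  (1/4 : ℂ) * pairFn (SchwartzMap.derivCLM ℝ ℂ (SchwartzMap.derivCLM ℝ ℂ φ₁)) φ₂ x t
    - (1/2 : ℂ) * pairFn (SchwartzMap.derivCLM ℝ ℂ φ₁) (SchwartzMap.derivCLM ℝ ℂ φ₂) x t
    + (1/4 : ℂ) * pairFn φ₁ (SchwartzMap.derivCLM ℝ ℂ (SchwartzMap.derivCLM ℝ ℂ φ₂)) x t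

lemma deriv1_hasDerivAt (x t : ℝ) :
    HasDerivAt (fun t => (1/2 : ℂ) * pairFn (SchwartzMap.derivCLM ℝ ℂ φ₁) φ₂ x t
      - (1/2 : ℂ) * pairFn φ₁ (SchwartzMap.derivCLM ℝ ℂ φ₂) x t) (pairFn2 φ₁ φ₂ x t) t := by
  have ha := (pairFn_hasDerivAt (SchwartzMap.derivCLM ℝ ℂ φ₁) φ₂ x t).const_mul (1/2 : ℂ)
  have hb := (pairFn_hasDerivAt φ₁ (SchwartzMap.derivCLM ℝ ℂ φ₂) x t).const_mul (1/2 : ℂ)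
  have := ha.sub hb
  convert this using 1 <;> try rfl
  simp only [pairFn2]
  ring

lemma pairFn_deriv2 (x : ℝ) : deriv (deriv (pairFn φ₁ φ₂ x)) = pairFn2 φ₁ φ₂ x := by
  rw [pairFn_deriv]
  exact funext fun t => (deriv1_hasDerivAt φ₁ φ₂ x t).deriv

lemma pairFn_deriv_differentiable (x : ℝ) : Differentiable ℝ (deriv (pairFn φ₁ φ₂ x)) := by
  rw [pairFn_deriv]
  exact fun t => (deriv1_hasDerivAt φ₁ φ₂ x t).differentiableAt

lemma pairFn_deriv_integrable (x : ℝ) : Integrable (deriv (pairFn φ₁ φ₂ x)) := by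
  rw [pairFn_deriv]
  exact ((pairFn_integrable _ _ x).const_mul _).sub ((pairFn_integrable _ _ x).const_mul _)

lemma pairFn2_integrable (x : ℝ) : Integrable (pairFn2 φ₁ φ₂ x) :=
  (((pairFn_integrable _ _ x).const_mul _).sub
    ((pairFn_integrable _ _ x).const_mul _)).add ((pairFn_integrable _ _ x).const_mul _)

lemma pairFn_deriv2_integrable (x : ℝ) : Integrable (deriv (deriv (pairFn φ₁ φ₂ x))) := by
  rw [pairFn_deriv2]; exact pairFn2_integrable φ₁ φ₂ x

lemma pairFn2_intNorm (φ₁ φ₂ : SchwartzMap ℝ ℂ) : ∃ C, 0 ≤ C ∧ ∀ x : ℝ,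
    (∫ t : ℝ, ‖pairFn2 φ₁ φ₂ x t‖) ≤ C * ((1 + |x|) ^ 2)⁻¹ := by
  obtain ⟨Ca, hCa, ha⟩ := pairFn_intNorm (SchwartzMap.derivCLM ℝ ℂ (SchwartzMap.derivCLM ℝ ℂ φ₁)) φ₂
  obtain ⟨Cb, hCb, hb⟩ := pairFn_intNorm (SchwartzMap.derivCLM ℝ ℂ φ₁) (SchwartzMap.derivCLM ℝ ℂ φ₂)
  obtain ⟨Cc, hCc, hc⟩ := pairFn_intNorm φ₁ (SchwartzMap.derivCLM ℝ ℂ (SchwartzMap.derivCLM ℝ ℂ φ₂))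
  refine ⟨(1/4) * Ca + (1/2) * Cb + (1/4) * Cc, by positivity, fun x => ?_⟩
  have hptw : ∀ t : ℝ, ‖pairFn2 φ₁ φ₂ x t‖ ≤
      (1/4) * ‖pairFn (SchwartzMap.derivCLM ℝ ℂ (SchwartzMap.derivCLM ℝ ℂ φ₁)) φ₂ x t‖
        + (1/2) * ‖pairFn (SchwartzMap.derivCLM ℝ ℂ φ₁) (SchwartzMap.derivCLM ℝ ℂ φ₂) x t‖
        + (1/4) * ‖pairFn φ₁ (SchwartzMap.derivCLM ℝ ℂ (SchwartzMap.derivCLM ℝ ℂ φ₂)) x t‖ := by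
    intro t
    have h4 : ‖(1/4 : ℂ)‖ = 1/4 := by norm_num
    have h2 : ‖(1/2 : ℂ)‖ = 1/2 := by norm_num
    calc ‖pairFn2 φ₁ φ₂ x t‖
        ≤ ‖(1/4 : ℂ) * pairFn (SchwartzMap.derivCLM ℝ ℂ (SchwartzMap.derivCLM ℝ ℂ φ₁)) φ₂ x t
            - (1/2 : ℂ) * pairFn (SchwartzMap.derivCLM ℝ ℂ φ₁) (SchwartzMap.derivCLM ℝ ℂ φ₂) x t‖
          + ‖(1/4 : ℂ) * pairFn φ₁ (SchwartzMap.derivCLM ℝ ℂ (SchwartzMap.derivCLM ℝ ℂ φ₂)) x t‖ :=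
        norm_add_le _ _
      _ ≤ _ := by
        rw [norm_mul, h4]
        have := norm_sub_le ((1/4 : ℂ) * pairFn (SchwartzMap.derivCLM ℝ ℂ (SchwartzMap.derivCLM ℝ ℂ φ₁)) φ₂ x t)
          ((1/2 : ℂ) * pairFn (SchwartzMap.derivCLM ℝ ℂ φ₁) (SchwartzMap.derivCLM ℝ ℂ φ₂) x t)
        rw [norm_mul, norm_mul, h4, h2] at this
        linarith
  have hintc : Integrable (fun t : ℝ =>
      (1/4) * ‖pairFn (SchwartzMap.derivCLM ℝ ℂ (SchwartzMap.derivCLM ℝ ℂ φ₁)) φ₂ x t‖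
        + (1/2) * ‖pairFn (SchwartzMap.derivCLM ℝ ℂ φ₁) (SchwartzMap.derivCLM ℝ ℂ φ₂) x t‖
        + (1/4) * ‖pairFn φ₁ (SchwartzMap.derivCLM ℝ ℂ (SchwartzMap.derivCLM ℝ ℂ φ₂)) x t‖) :=
    (((pairFn_integrable _ _ x).norm.const_mul _).add
      ((pairFn_integrable _ _ x).norm.const_mul _)).add
      ((pairFn_integrable _ _ x).norm.const_mul _)
  calc (∫ t : ℝ, ‖pairFn2 φ₁ φ₂ x t‖)
      ≤ ∫ t : ℝ, ((1/4) * ‖pairFn (SchwartzMap.derivCLM ℝ ℂ (SchwartzMap.derivCLM ℝ ℂ φ₁)) φ₂ x t‖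
          + (1/2) * ‖pairFn (SchwartzMap.derivCLM ℝ ℂ φ₁) (SchwartzMap.derivCLM ℝ ℂ φ₂) x t‖
          + (1/4) * ‖pairFn φ₁ (SchwartzMap.derivCLM ℝ ℂ (SchwartzMap.derivCLM ℝ ℂ φ₂)) x t‖) :=
        integral_mono (pairFn2_integrable φ₁ φ₂ x).norm hintc hptw
    _ = (1/4) * (∫ t : ℝ, ‖pairFn (SchwartzMap.derivCLM ℝ ℂ (SchwartzMap.derivCLM ℝ ℂ φ₁)) φ₂ x t‖)
          + (1/2) * (∫ t : ℝ, ‖pairFn (SchwartzMap.derivCLM ℝ ℂ φ₁) (SchwartzMap.derivCLM ℝ ℂ φ₂) x t‖)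
          + (1/4) * (∫ t : ℝ, ‖pairFn φ₁ (SchwartzMap.derivCLM ℝ ℂ (SchwartzMap.derivCLM ℝ ℂ φ₂)) x t‖) := by
        rw [integral_add, integral_add, integral_const_mul, integral_const_mul, integral_const_mul]
        · exact (pairFn_integrable _ _ x).norm.const_mul _
        · exact (pairFn_integrable _ _ x).norm.const_mul _
        · exact ((pairFn_integrable _ _ x).norm.const_mul _).add
            ((pairFn_integrable _ _ x).norm.const_mul _)
        · exact (pairFn_integrable _ _ x).norm.const_mul _
    _ ≤ (1/4) * (Ca * ((1 + |x|) ^ 2)⁻¹) + (1/2) * (Cb * ((1 + |x|) ^ 2)⁻¹)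
          + (1/4) * (Cc * ((1 + |x|) ^ 2)⁻¹) := by
        have h1 := ha x; have h2 := hb x; have h3 := hc x
        gcongr
    _ = ((1/4) * Ca + (1/2) * Cb + (1/4) * Cc) * ((1 + |x|) ^ 2)⁻¹ := by ring

lemma pairFn_fourier_bound (φ₁ φ₂ : SchwartzMap ℝ ℂ) : ∃ C, 0 ≤ C ∧ ∀ x ξ : ℝ,
    ‖𝓕 (pairFn φ₁ φ₂ x) ξ‖ * (1 + (2 * π * ξ) ^ 2) ≤ C * ((1 + |x|) ^ 2)⁻¹ := by
  obtain ⟨C0, hC0, h0⟩ := pairFn_intNorm φ₁ φ₂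
  obtain ⟨C2, hC2, h2⟩ := pairFn2_intNorm φ₁ φ₂
  refine ⟨C0 + C2, by positivity, fun x ξ => ?_⟩
  have hb0 : ‖𝓕 (pairFn φ₁ φ₂ x) ξ‖ ≤ C0 * ((1 + |x|) ^ 2)⁻¹ :=
    le_trans (VectorFourier.norm_fourierIntegral_le_integral_norm _ _ _ _ _) (h0 x)
  have hd1 : 𝓕 (deriv (pairFn φ₁ φ₂ x)) = fun ξ : ℝ => (2 * ↑π * Complex.I * ↑ξ) • 𝓕 (pairFn φ₁ φ₂ x) ξ :=
    Real.fourier_deriv (pairFn_integrable φ₁ φ₂ x) (pairFn_differentiable φ₁ φ₂ x)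
      (pairFn_deriv_integrable φ₁ φ₂ x)
  have hd2 : 𝓕 (deriv (deriv (pairFn φ₁ φ₂ x))) = fun ξ : ℝ =>
      (2 * ↑π * Complex.I * ↑ξ) • 𝓕 (deriv (pairFn φ₁ φ₂ x)) ξ :=
    Real.fourier_deriv (pairFn_deriv_integrable φ₁ φ₂ x)
      (pairFn_deriv_differentiable φ₁ φ₂ x) (pairFn_deriv2_integrable φ₁ φ₂ x)
  have hb2 : ‖𝓕 (deriv (deriv (pairFn φ₁ φ₂ x))) ξ‖ ≤ C2 * ((1 + |x|) ^ 2)⁻¹ := by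
    refine le_trans (VectorFourier.norm_fourierIntegral_le_integral_norm _ _ _ _ _) ?_
    rw [pairFn_deriv2]
    exact h2 x
  have hnorm : ‖(2 * ↑π * Complex.I * (ξ:ℂ))‖ = 2 * π * |ξ| := by
    simp [_root_.abs_of_nonneg Real.pi_pos.le, abs_mul]
  have hkey : (2 * π * ξ) ^ 2 * ‖𝓕 (pairFn φ₁ φ₂ x) ξ‖ ≤ C2 * ((1 + |x|) ^ 2)⁻¹ := by
    have : ‖𝓕 (deriv (deriv (pairFn φ₁ φ₂ x))) ξ‖
        = (2 * π * |ξ|) ^ 2 * ‖𝓕 (pairFn φ₁ φ₂ x) ξ‖ := by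
      rw [hd2]
      simp only [hd1]
      rw [norm_smul, norm_smul, hnorm]
      ring
    have habs : (2 * π * ξ) ^ 2 = (2 * π * |ξ|) ^ 2 := by
      rw [mul_pow, mul_pow, mul_pow, mul_pow, _root_.sq_abs]
    rw [habs, ← this]
    exact hb2
  nlinarith [norm_nonneg (𝓕 (pairFn φ₁ φ₂ x) ξ)]


lemma one_add_sq_le_aux (ξ : ℝ) : 1 + ξ ^ 2 ≤ 1 + (2 * π * ξ) ^ 2 := by
  have h9 : 9 ≤ π ^ 2 := by nlinarith [Real.pi_gt_three]
  nlinarith [sq_nonneg ξ, mul_nonneg (sq_nonneg ξ) (by linarith : (0:ℝ) ≤ π ^ 2 - 1)]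

lemma pairFn_fourier_continuous (φ₁ φ₂ : SchwartzMap ℝ ℂ) (x : ℝ) :
    Continuous (𝓕 (pairFn φ₁ φ₂ x)) :=
  VectorFourier.fourierIntegral_continuous Real.continuous_fourierChar
    (by exact (continuous_fst.mul continuous_snd : Continuous fun p : ℝ × ℝ => p.1 * p.2).congr (fun p => by simp [mul_comm]))
    (pairFn_integrable φ₁ φ₂ x)

lemma pairFn_fourier_integrable (φ₁ φ₂ : SchwartzMap ℝ ℂ) (x : ℝ) :
    Integrable (𝓕 (pairFn φ₁ φ₂ x)) := by
  obtain ⟨C, hC, h⟩ := pairFn_fourier_bound φ₁ φ₂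
  refine Integrable.mono' ((integrable_inv_one_add_sq.const_mul (C * ((1 + |x|) ^ 2)⁻¹)))
    (pairFn_fourier_continuous φ₁ φ₂ x).aestronglyMeasurable
    (Filter.Eventually.of_forall fun ξ => ?_)
  have h1 : (0:ℝ) < 1 + ξ ^ 2 := by positivity
  have h2 : ‖𝓕 (pairFn φ₁ φ₂ x) ξ‖ * (1 + ξ ^ 2) ≤ C * ((1 + |x|) ^ 2)⁻¹ := by
    refine le_trans ?_ (h x ξ)
    exact mul_le_mul_of_nonneg_left (one_add_sq_le_aux ξ) (norm_nonneg _)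
  rw [← le_div_iff₀ h1] at h2
  simpa [div_eq_mul_inv, mul_assoc] using h2

lemma pairFn_fourier_fourier (φ₁ φ₂ : SchwartzMap ℝ ℂ) (x t : ℝ) :
    𝓕 (𝓕 (pairFn φ₁ φ₂ x)) t = pairFn φ₁ φ₂ x (-t) := by
  have hinv := (pairFn_continuous φ₁ φ₂ x).fourierInv_fourier_eq (pairFn_integrable φ₁ φ₂ x)
    (pairFn_fourier_integrable φ₁ φ₂ x)
  calc 𝓕 (𝓕 (pairFn φ₁ φ₂ x)) t = 𝓕⁻ (𝓕 (pairFn φ₁ φ₂ x)) (-t) := by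
        rw [Real.fourierInv_eq_fourier_neg, neg_neg]
    _ = pairFn φ₁ φ₂ x (-t) := by rw [hinv]

lemma flip_innerₗ : (innerₗ ℝ).flip = innerₗ ℝ :=
  LinearMap.ext fun a => LinearMap.ext fun b => by simp [mul_comm]

lemma wignerPair_eq_fourier {hbar : ℝ} (hh : 0 < hbar) (ψ₁ ψ₂ : SchwartzMap ℝ ℂ) (x p : ℝ) :
    wignerPair hbar ⇑ψ₁ ⇑ψ₂ x p
      = ((1 / (2 * π * hbar) : ℝ) : ℂ) * 𝓕 (pairFn ψ₁ ψ₂ x) (-p / (2 * π * hbar)) := by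
  have hπ := Real.pi_pos
  rw [wignerPair, Real.fourier_real_eq_integral_exp_smul]
  congr 1
  refine integral_congr_ae (Filter.Eventually.of_forall fun x' => ?_)
  simp only [smul_eq_mul, pairFn]
  have hr : -2 * π * x' * (-p / (2 * π * hbar)) = p * x' / hbar := by
    field_simp
  rw [hr]
  push_cast
  ring

lemma inner_p_integral {hbar : ℝ} (hh : 0 < hbar) (ψ₁ ψ₂ χ₁ χ₂ : SchwartzMap ℝ ℂ) (x : ℝ) :
    (∫ p : ℝ, wignerPair hbar ⇑ψ₁ ⇑ψ₂ x p * wignerPair hbar ⇑χ₁ ⇑χ₂ x p)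
      = ((1 / (2 * π * hbar) : ℝ) : ℂ)
          * ∫ t : ℝ, pairFn ψ₁ ψ₂ x t * pairFn χ₁ χ₂ x (-t) := by
  have hπ := Real.pi_pos
  set c : ℂ := ((1 / (2 * π * hbar) : ℝ) : ℂ) with hc_def
  set F := 𝓕 (pairFn ψ₁ ψ₂ x) with hF
  set G := 𝓕 (pairFn χ₁ χ₂ x) with hG
  have e1 : ∀ p : ℝ, wignerPair hbar ⇑ψ₁ ⇑ψ₂ x p * wignerPair hbar ⇑χ₁ ⇑χ₂ x p
      = c * c * ((fun ξ => F ξ * G ξ) (-(2 * π * hbar)⁻¹ * p)) := by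
    intro p
    rw [wignerPair_eq_fourier hh ψ₁ ψ₂ x p, wignerPair_eq_fourier hh χ₁ χ₂ x p]
    rw [show -(2 * π * hbar)⁻¹ * p = -p / (2 * π * hbar) by ring]
    ring
  have habs : |(-(2 * π * hbar)⁻¹)⁻¹| = 2 * π * hbar := by
    rw [inv_neg, inv_inv, abs_neg, abs_of_pos (by positivity)]
  have hmulf : (∫ ξ : ℝ, F ξ * G ξ) = ∫ t : ℝ, pairFn ψ₁ ψ₂ x t * pairFn χ₁ χ₂ x (-t) := by
    have h := VectorFourier.integral_bilin_fourierIntegral_eq_flip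
      (M := ContinuousLinearMap.mul ℂ ℂ) (L := innerₗ ℝ) Real.continuous_fourierChar
      (by exact (continuous_fst.mul continuous_snd : Continuous fun p : ℝ × ℝ => p.1 * p.2).congr (fun p => by simp [mul_comm]))
      (pairFn_integrable ψ₁ ψ₂ x)
      (pairFn_fourier_integrable χ₁ χ₂ x)
    rw [flip_innerₗ] at h
    simp only [ContinuousLinearMap.mul_apply'] at h
    rw [show (∫ ξ : ℝ, F ξ * G ξ)
        = ∫ ξ : ℝ, (VectorFourier.fourierIntegral (Real.fourierChar) volume (innerₗ ℝ)
            (pairFn ψ₁ ψ₂ x) ξ) * G ξ from rfl, h]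
    refine integral_congr_ae (Filter.Eventually.of_forall fun t => ?_)
    show pairFn ψ₁ ψ₂ x t * VectorFourier.fourierIntegral Real.fourierChar volume (innerₗ ℝ)
        (𝓕 (pairFn χ₁ χ₂ x)) t = pairFn ψ₁ ψ₂ x t * pairFn χ₁ χ₂ x (-t)
    exact congrArg (fun z => pairFn ψ₁ ψ₂ x t * z) (pairFn_fourier_fourier χ₁ χ₂ x t)
  have h2πh : ((2 * π * hbar : ℝ) : ℂ) ≠ 0 := Complex.ofReal_ne_zero.mpr (by positivity)
  have hcc : c * c * ((2 * π * hbar : ℝ) : ℂ) = c := by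
    have hr : (1 / (2 * π * hbar) : ℝ) * (1 / (2 * π * hbar)) * (2 * π * hbar)
        = 1 / (2 * π * hbar) := by field_simp
    calc c * c * ((2 * π * hbar : ℝ) : ℂ)
        = (((1 / (2 * π * hbar) : ℝ) * (1 / (2 * π * hbar)) * (2 * π * hbar) : ℝ) : ℂ) := by
          rw [hc_def]; push_cast; ring
      _ = c := by rw [hr]
  calc (∫ p : ℝ, wignerPair hbar ⇑ψ₁ ⇑ψ₂ x p * wignerPair hbar ⇑χ₁ ⇑χ₂ x p)
      = ∫ p : ℝ, c * c * ((fun ξ => F ξ * G ξ) (-(2 * π * hbar)⁻¹ * p)) :=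
        integral_congr_ae (Filter.Eventually.of_forall e1)
    _ = c * c * ∫ p : ℝ, (fun ξ => F ξ * G ξ) (-(2 * π * hbar)⁻¹ * p) :=
        integral_const_mul _ _
    _ = c * c * ((2 * π * hbar : ℝ) • ∫ ξ : ℝ, F ξ * G ξ) := by
        rw [MeasureTheory.Measure.integral_comp_mul_left (fun ξ => F ξ * G ξ)
          (-(2 * π * hbar)⁻¹), habs]
    _ = c * c * ((2 * π * hbar : ℝ) : ℂ) * ∫ ξ : ℝ, F ξ * G ξ := by
        rw [Complex.real_smul]; ring
    _ = c * ∫ t : ℝ, pairFn ψ₁ ψ₂ x t * pairFn χ₁ χ₂ x (-t) := by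
        rw [hmulf, hcc]

lemma wigner_aesm (hbar : ℝ) (ψ₁ ψ₂ : SchwartzMap ℝ ℂ) :
    AEStronglyMeasurable (fun q : ℝ × ℝ => wignerPair hbar ⇑ψ₁ ⇑ψ₂ q.2 q.1)
      (volume.prod volume) := by
  have hΦ : Continuous (fun z : (ℝ × ℝ) × ℝ =>
      pairFn ψ₁ ψ₂ z.1.2 z.2 * Complex.exp (Complex.I * z.1.1 * z.2 / hbar)) := by
    apply Continuous.mul
    · exact (pairFn_continuous₂ ψ₁ ψ₂).comp
        ((continuous_snd.comp continuous_fst).prodMk continuous_snd)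
    · apply Complex.continuous_exp.comp
      exact ((continuous_const.mul (Complex.continuous_ofReal.comp
        (continuous_fst.comp continuous_fst))).mul
        (Complex.continuous_ofReal.comp continuous_snd)).div_const _
  have hsm := StronglyMeasurable.integral_prod_right' (ν := volume) hΦ.stronglyMeasurable
  have heq : (fun q : ℝ × ℝ => wignerPair hbar ⇑ψ₁ ⇑ψ₂ q.2 q.1)
      = fun q : ℝ × ℝ => ((1 / (2 * π * hbar) : ℝ) : ℂ) *
          ∫ t : ℝ, pairFn ψ₁ ψ₂ q.2 t * Complex.exp (Complex.I * q.1 * t / hbar) := rfl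
  rw [heq]
  exact (hsm.aestronglyMeasurable).const_mul _

lemma integrable_inv_one_add_div_sq {hbar : ℝ} (hh : 0 < hbar) :
    Integrable (fun p : ℝ => (1 + (p / hbar) ^ 2)⁻¹) := by
  have h := (integrable_comp_smul_iff (μ := volume) (fun s : ℝ => (1 + s ^ 2)⁻¹)
    (inv_ne_zero hh.ne')).2 integrable_inv_one_add_sq
  refine h.congr (Filter.Eventually.of_forall fun p => ?_)
  simp only [smul_eq_mul, inv_mul_eq_div]

lemma wigner_pointwise_bound {hbar : ℝ} (hh : 0 < hbar) (ψ₁ ψ₂ : SchwartzMap ℝ ℂ) :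
    ∃ C, 0 ≤ C ∧ ∀ x p : ℝ,
      ‖wignerPair hbar ⇑ψ₁ ⇑ψ₂ x p‖ * (1 + (p / hbar) ^ 2) ≤ C * ((1 + |x|) ^ 2)⁻¹ := by
  have hπ := Real.pi_pos
  obtain ⟨C, hC, h⟩ := pairFn_fourier_bound ψ₁ ψ₂
  refine ⟨(1 / (2 * π * hbar)) * C, by positivity, fun x p => ?_⟩
  rw [wignerPair_eq_fourier hh]
  have hξ : 1 + (2 * π * (-p / (2 * π * hbar))) ^ 2 = 1 + (p / hbar) ^ 2 := by
    congr 1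
    rw [show 2 * π * (-p / (2 * π * hbar)) = -(p / hbar) by field_simp]
    rw [neg_sq]
  have hnorm : ‖((1 / (2 * π * hbar) : ℝ) : ℂ) * 𝓕 (pairFn ψ₁ ψ₂ x) (-p / (2 * π * hbar))‖
      = (1 / (2 * π * hbar)) * ‖𝓕 (pairFn ψ₁ ψ₂ x) (-p / (2 * π * hbar))‖ := by
    rw [norm_mul, Complex.norm_real, Real.norm_eq_abs, abs_of_pos (by positivity)]
  rw [hnorm]
  have hb := h x (-p / (2 * π * hbar))
  rw [hξ] at hb
  calc 1 / (2 * π * hbar) * ‖𝓕 (pairFn ψ₁ ψ₂ x) (-p / (2 * π * hbar))‖ * (1 + (p / hbar) ^ 2)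
      = 1 / (2 * π * hbar) * (‖𝓕 (pairFn ψ₁ ψ₂ x) (-p / (2 * π * hbar))‖ * (1 + (p / hbar) ^ 2)) := by
        ring
    _ ≤ 1 / (2 * π * hbar) * (C * ((1 + |x|) ^ 2)⁻¹) := by
        exact mul_le_mul_of_nonneg_left hb (by positivity)
    _ = 1 / (2 * π * hbar) * C * ((1 + |x|) ^ 2)⁻¹ := by ring

lemma wigner_norm_le₁ {hbar : ℝ} (f₁ f₂ : ℝ → ℂ) (hh : 0 < hbar) {C : ℝ} (hC : 0 ≤ C)
    (h : ∀ x p : ℝ, ‖wignerPair hbar f₁ f₂ x p‖ * (1 + (p / hbar) ^ 2) ≤ C * ((1 + |x|) ^ 2)⁻¹)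
    (x p : ℝ) :
    ‖wignerPair hbar f₁ f₂ x p‖ ≤ C * ((1 + |x|) ^ 2)⁻¹ * (1 + (p / hbar) ^ 2)⁻¹ := by
  have h1 : (0:ℝ) < 1 + (p / hbar) ^ 2 := by positivity
  have := h x p
  rw [← le_div_iff₀ h1] at this
  rw [div_eq_mul_inv] at this
  exact this

lemma wigner_prod_integrable {hbar : ℝ} (hh : 0 < hbar) (ψ₁ ψ₂ χ₁ χ₂ : SchwartzMap ℝ ℂ) :
    Integrable (Function.uncurry fun p x : ℝ =>
      wignerPair hbar ⇑ψ₁ ⇑ψ₂ x p * wignerPair hbar ⇑χ₁ ⇑χ₂ x p) (volume.prod volume) := by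
  obtain ⟨C1, hC1, h1⟩ := wigner_pointwise_bound hh ψ₁ ψ₂
  obtain ⟨C2, hC2, h2⟩ := wigner_pointwise_bound hh χ₁ χ₂
  have hx4 : Integrable (fun x : ℝ => ((1 + |x|) ^ 2)⁻¹ * ((1 + |x|) ^ 2)⁻¹) := by
    have he : (fun x : ℝ => ((1 + |x|) ^ 2)⁻¹ * ((1 + |x|) ^ 2)⁻¹)
        = fun x : ℝ => ((1 + |x|) ^ 4)⁻¹ := funext fun x => by
      rw [← mul_inv, ← pow_add]
    rw [he]
    exact integrable_inv_pow (k := 4) (by norm_num)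
  have hg : Integrable (fun q : ℝ × ℝ =>
      (C1 * C2 * (1 + (q.1 / hbar) ^ 2)⁻¹) * (((1 + |q.2|) ^ 2)⁻¹ * ((1 + |q.2|) ^ 2)⁻¹))
      (volume.prod volume) :=
    ((integrable_inv_one_add_div_sq hh).const_mul (C1 * C2)).mul_prod hx4
  refine Integrable.mono' hg ?_ (Filter.Eventually.of_forall fun q => ?_)
  · exact ((wigner_aesm hbar ψ₁ ψ₂).mul (wigner_aesm hbar χ₁ χ₂))
  · rcases q with ⟨p, x⟩
    have e1 := wigner_norm_le₁ (⇑ψ₁) (⇑ψ₂) hh hC1 h1 x p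
    have e2 : ‖wignerPair hbar ⇑χ₁ ⇑χ₂ x p‖ ≤ C2 * ((1 + |x|) ^ 2)⁻¹ := by
      have hs : (1:ℝ) ≤ 1 + (p / hbar) ^ 2 := by nlinarith [sq_nonneg (p / hbar)]
      have := h2 x p
      nlinarith [norm_nonneg (wignerPair hbar ⇑χ₁ ⇑χ₂ x p)]
    show ‖wignerPair hbar ⇑ψ₁ ⇑ψ₂ x p * wignerPair hbar ⇑χ₁ ⇑χ₂ x p‖ ≤ _
    rw [norm_mul]
    calc ‖wignerPair hbar ⇑ψ₁ ⇑ψ₂ x p‖ * ‖wignerPair hbar ⇑χ₁ ⇑χ₂ x p‖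
        ≤ (C1 * ((1 + |x|) ^ 2)⁻¹ * (1 + (p / hbar) ^ 2)⁻¹) * (C2 * ((1 + |x|) ^ 2)⁻¹) := by
          exact mul_le_mul e1 e2 (norm_nonneg _) (by positivity)
      _ = (C1 * C2 * (1 + (p / hbar) ^ 2)⁻¹) * (((1 + |x|) ^ 2)⁻¹ * ((1 + |x|) ^ 2)⁻¹) := by
          ring

/-- Pointwise product with conjugation. -/
def mulConj (φ₁ φ₂ : SchwartzMap ℝ ℂ) (u : ℝ) : ℂ := (starRingEnd ℂ) (φ₁ u) * φ₂ u

lemma mulConj_decay (φ₁ φ₂ : SchwartzMap ℝ ℂ) :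
    ∃ C, 0 ≤ C ∧ ∀ u : ℝ, ‖mulConj φ₁ φ₂ u‖ * (1 + |u|) ^ 4 ≤ C := by
  obtain ⟨C1, hC1, h1⟩ := decay4 φ₁
  obtain ⟨C2, hC2, h2⟩ := decay4 φ₂
  refine ⟨C1 * C2, by positivity, fun u => ?_⟩
  have hn : ‖mulConj φ₁ φ₂ u‖ = ‖φ₁ u‖ * ‖φ₂ u‖ := by simp [mulConj]
  have hb2 : ‖φ₂ u‖ ≤ C2 := by
    have h0 : (1:ℝ) ≤ 1 + |u| := by linarith [abs_nonneg u]
    have hone : (1:ℝ) ≤ (1 + |u|) ^ 4 := one_le_pow₀ h0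
    nlinarith [h2 u, norm_nonneg (φ₂ u)]
  rw [hn]
  have hp0 : (0:ℝ) ≤ 1 + |u| := by linarith [abs_nonneg u]
  have hp4 : (0:ℝ) ≤ (1 + |u|) ^ 4 := pow_nonneg hp0 4
  calc ‖φ₁ u‖ * ‖φ₂ u‖ * (1 + |u|) ^ 4 = (‖φ₁ u‖ * (1 + |u|) ^ 4) * ‖φ₂ u‖ := by ring
    _ ≤ C1 * C2 := by nlinarith [h1 u, norm_nonneg (φ₁ u), norm_nonneg (φ₂ u)]

lemma mulConj_continuous (φ₁ φ₂ : SchwartzMap ℝ ℂ) : Continuous (mulConj φ₁ φ₂) := by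
  show Continuous fun u => (starRingEnd ℂ) (φ₁ u) * φ₂ u
  exact (continuous_star.comp φ₁.continuous).mul φ₂.continuous

/-- Generic decoupling bound. -/
lemma prod_decay_bound {f g : ℝ → ℂ} {Cf Cg : ℝ}
    (hf : ∀ u : ℝ, ‖f u‖ * (1 + |u|) ^ 4 ≤ Cf) (hg : ∀ u : ℝ, ‖g u‖ * (1 + |u|) ^ 4 ≤ Cg)
    {u v a b : ℝ} (hab : |a| ≤ |u| + |v|) (hbb : |b| ≤ |u| + |v|) :
    ‖f u‖ * ‖g v‖ ≤ Cf * Cg * ((1 + |a|) ^ 2)⁻¹ * ((1 + |b|) ^ 2)⁻¹ := by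
  have hgeom := geom hab hbb
  have key : ‖f u‖ * ‖g v‖ * ((1 + |a|) ^ 2 * (1 + |b|) ^ 2) ≤ Cf * Cg := by
    calc ‖f u‖ * ‖g v‖ * ((1 + |a|) ^ 2 * (1 + |b|) ^ 2)
        ≤ ‖f u‖ * ‖g v‖ * ((1 + |u|) ^ 4 * (1 + |v|) ^ 4) := by
          have hnn : (0:ℝ) ≤ ‖f u‖ * ‖g v‖ := by positivity
          nlinarith
      _ = (‖f u‖ * (1 + |u|) ^ 4) * (‖g v‖ * (1 + |v|) ^ 4) := by ring
      _ ≤ Cf * Cg := by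
          have hY0 : (0:ℝ) ≤ ‖g v‖ * (1 + |v|) ^ 4 := by positivity
          have hCf0 : (0:ℝ) ≤ Cf := le_trans (by positivity) (hf u)
          exact mul_le_mul (hf u) (hg v) hY0 hCf0
  rw [mul_assoc, ← mul_inv, le_mul_inv_iff₀ (by positivity)]
  calc ‖f u‖ * ‖g v‖ * ((1 + |a|) ^ 2 * (1 + |b|) ^ 2) ≤ Cf * Cg := key
    _ ≤ _ := le_refl _

lemma abs_le_sum₃ (x r : ℝ) : |x| ≤ |r| + |2 * x - r| := by
  have h : |r + (2 * x - r)| ≤ |r| + |2 * x - r| := abs_add_le _ _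
  rw [show r + (2 * x - r) = 2 * x by ring, abs_mul, show |(2:ℝ)| = 2 by norm_num] at h
  linarith [abs_nonneg x]

lemma factorization (a₁ a₂ b₁ b₂ : SchwartzMap ℝ ℂ) :
    (∫ x : ℝ, ∫ t : ℝ, mulConj a₁ a₂ (x + t / 2) * mulConj b₁ b₂ (x - t / 2))
      = (∫ u : ℝ, mulConj a₁ a₂ u) * (∫ v : ℝ, mulConj b₁ b₂ v) := by
  obtain ⟨CA, hCA, hA⟩ := mulConj_decay a₁ a₂
  obtain ⟨CB, hCB, hB⟩ := mulConj_decay b₁ b₂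
  set A := mulConj a₁ a₂ with hAdef
  set B := mulConj b₁ b₂ with hBdef
  have step12 : ∀ x : ℝ, (∫ t : ℝ, A (x + t / 2) * B (x - t / 2))
      = (2:ℝ) • ∫ r : ℝ, A r * B (2 * x - r) := by
    intro x
    have h1 : (∫ t : ℝ, A (x + t / 2) * B (x - t / 2))
        = |(2:ℝ)| • ∫ r : ℝ, A (x + r) * B (x - r) :=
      MeasureTheory.Measure.integral_comp_div (fun r => A (x + r) * B (x - r)) 2
    rw [show |(2:ℝ)| = 2 by norm_num] at h1
    have h2 : (∫ r : ℝ, A (x + r) * B (x - r)) = ∫ r : ℝ, A r * B (2 * x - r) := by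
      have h3 : (∫ r : ℝ, A (r + x) * B (2 * x - (r + x))) = ∫ r : ℝ, A r * B (2 * x - r) :=
        integral_add_right_eq_self (μ := volume) (fun r => A r * B (2 * x - r)) x
      rw [← h3]
      refine integral_congr_ae (Filter.Eventually.of_forall fun r => ?_)
      show A (x + r) * B (x - r) = A (r + x) * B (2 * x - (r + x))
      rw [show x + r = r + x by ring, show x - r = 2 * x - (r + x) by ring]
    rw [h1, h2]
  have hswap : (∫ x : ℝ, ∫ r : ℝ, A r * B (2 * x - r))
      = ∫ r : ℝ, ∫ x : ℝ, A r * B (2 * x - r) := by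
    apply integral_integral_swap
    have hg : Integrable (fun q : ℝ × ℝ =>
        (CA * CB * ((1 + |q.1|) ^ 2)⁻¹) * ((1 + |q.2|) ^ 2)⁻¹) (volume.prod volume) :=
      ((integrable_inv_pow (k := 2) (by norm_num)).const_mul (CA * CB)).mul_prod
        (integrable_inv_pow (k := 2) (by norm_num))
    refine Integrable.mono' hg ?_ (Filter.Eventually.of_forall fun q => ?_)
    · apply Continuous.aestronglyMeasurable
      apply Continuous.mul
      · exact (mulConj_continuous a₁ a₂).comp continuous_snd
      · exact (mulConj_continuous b₁ b₂).comp (by continuity)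
    · rcases q with ⟨x, r⟩
      show ‖A r * B (2 * x - r)‖ ≤ _
      rw [norm_mul]
      have := prod_decay_bound hA hB (abs_le_sum₃ x r)
        (by linarith [abs_nonneg (2 * x - r)] : |r| ≤ |r| + |2 * x - r|)
      calc ‖A r‖ * ‖B (2 * x - r)‖
          ≤ CA * CB * ((1 + |x|) ^ 2)⁻¹ * ((1 + |r|) ^ 2)⁻¹ := this
        _ = (CA * CB * ((1 + |x|) ^ 2)⁻¹) * ((1 + |r|) ^ 2)⁻¹ := by ring
  have step5 : ∀ r : ℝ, (∫ x : ℝ, A r * B (2 * x - r))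
      = A r * ((2⁻¹ : ℝ) • ∫ v : ℝ, B v) := by
    intro r
    rw [integral_const_mul]
    congr 1
    have h1 : (∫ x : ℝ, B (2 * x - r)) = |(2:ℝ)⁻¹| • ∫ w : ℝ, B (w - r) :=
      MeasureTheory.Measure.integral_comp_mul_left (fun w => B (w - r)) 2
    rw [integral_sub_right_eq_self (μ := volume) B r] at h1
    rw [h1, show |(2:ℝ)⁻¹| = 2⁻¹ by norm_num]
  calc (∫ x : ℝ, ∫ t : ℝ, A (x + t / 2) * B (x - t / 2))
      = ∫ x : ℝ, (2:ℝ) • ∫ r : ℝ, A r * B (2 * x - r) :=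
        integral_congr_ae (Filter.Eventually.of_forall step12)
    _ = (2:ℝ) • ∫ x : ℝ, ∫ r : ℝ, A r * B (2 * x - r) := integral_smul _ _
    _ = (2:ℝ) • ∫ r : ℝ, ∫ x : ℝ, A r * B (2 * x - r) := by rw [hswap]
    _ = (2:ℝ) • ∫ r : ℝ, A r * ((2⁻¹ : ℝ) • ∫ v : ℝ, B v) :=
        congrArg _ (integral_congr_ae (Filter.Eventually.of_forall step5))
    _ = (2:ℝ) • ((∫ u : ℝ, A u) * ((2⁻¹ : ℝ) • ∫ v : ℝ, B v)) := by
        rw [integral_mul_const]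
    _ = (∫ u : ℝ, A u) * (∫ v : ℝ, B v) := by
        rw [Complex.real_smul, Complex.real_smul]
        push_cast
        ring

end WignerMoyal

end

open WignerMoyal

/-- Generalized Moyal identity:
`∫∫ W_{(ψ₁,ψ₂)} W_{(χ₁,χ₂)} dx dp = (1/(2π hbar)) ⟨ψ₁|χ₂⟩ ⟨χ₁|ψ₂⟩`. -/
theorem wignerPair_moyal (hbar : ℝ) (hhbar : 0 < hbar)
    (ψ₁ ψ₂ χ₁ χ₂ : SchwartzMap ℝ ℂ) :
    (∫ p : ℝ, ∫ x : ℝ,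
        wignerPair hbar (⇑ψ₁) (⇑ψ₂) x p * wignerPair hbar (⇑χ₁) (⇑χ₂) x p) =
      ((1 / (2 * Real.pi * hbar) : ℝ) : ℂ) *
        (∫ x : ℝ, (starRingEnd ℂ) (ψ₁ x) * χ₂ x) *
        (∫ x : ℝ, (starRingEnd ℂ) (χ₁ x) * ψ₂ x) := by
  have hswap := integral_integral_swap
    (f := fun p x : ℝ => wignerPair hbar (⇑ψ₁) (⇑ψ₂) x p * wignerPair hbar (⇑χ₁) (⇑χ₂) x p)
    (wigner_prod_integrable hhbar ψ₁ ψ₂ χ₁ χ₂)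
  rw [hswap]
  calc (∫ x : ℝ, ∫ p : ℝ,
          wignerPair hbar (⇑ψ₁) (⇑ψ₂) x p * wignerPair hbar (⇑χ₁) (⇑χ₂) x p)
      = ∫ x : ℝ, ((1 / (2 * Real.pi * hbar) : ℝ) : ℂ)
          * ∫ t : ℝ, pairFn ψ₁ ψ₂ x t * pairFn χ₁ χ₂ x (-t) :=
        integral_congr_ae (Filter.Eventually.of_forall fun x =>
          inner_p_integral hhbar ψ₁ ψ₂ χ₁ χ₂ x)
    _ = ((1 / (2 * Real.pi * hbar) : ℝ) : ℂ)
          * ∫ x : ℝ, ∫ t : ℝ, pairFn ψ₁ ψ₂ x t * pairFn χ₁ χ₂ x (-t) :=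
        integral_const_mul _ _
    _ = ((1 / (2 * Real.pi * hbar) : ℝ) : ℂ)
          * ∫ x : ℝ, ∫ t : ℝ, mulConj ψ₁ χ₂ (x + t / 2) * mulConj χ₁ ψ₂ (x - t / 2) := by
        congr 1
        refine integral_congr_ae (Filter.Eventually.of_forall fun x => ?_)
        refine integral_congr_ae (Filter.Eventually.of_forall fun t => ?_)
        show pairFn ψ₁ ψ₂ x t * pairFn χ₁ χ₂ x (-t)
            = mulConj ψ₁ χ₂ (x + t / 2) * mulConj χ₁ ψ₂ (x - t / 2)
        simp only [pairFn, mulConj]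
        rw [show x + -t / 2 = x - t / 2 by ring, show x - -t / 2 = x + t / 2 by ring]
        ring
    _ = ((1 / (2 * Real.pi * hbar) : ℝ) : ℂ)
          * ((∫ u : ℝ, mulConj ψ₁ χ₂ u) * (∫ v : ℝ, mulConj χ₁ ψ₂ v)) := by
        rw [factorization]
    _ = ((1 / (2 * Real.pi * hbar) : ℝ) : ℂ) *
          (∫ x : ℝ, (starRingEnd ℂ) (ψ₁ x) * χ₂ x) *
          (∫ x : ℝ, (starRingEnd ℂ) (χ₁ x) * ψ₂ x) := by
        rw [← mul_assoc]
        rfl
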